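/- Let p̃(u) = 1/((u² + 2) ln²(u² + 2)). For every real x > 0 satisfying ln(x² + 2) > 8/3, the tail integral satisfies ∫_x^∞ p̃(u) du > (1/4) · (x² + 2)^{-5/2}. -/

import Mathlib

open MeasureTheory Real

/-- For every `x > 0` with `ln(x² + 2) > 8/3`, the tail integral of
`p̃(u) = 1/((u² + 2) ln²(u² + 2))` satisfies
`∫_x^∞ p̃(u) du > (1/4) (x² + 2)^{-5/2}`. -/
theorem ptilde_tail_lower_bound (x : ℝ) (hx : 0 < x)
    (hlog : Real.log (x ^ 2 + 2) > 8 / 3) :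
    (∫ u in Set.Ioi x, 1 / ((u ^ 2 + 2) * (Real.log (u ^ 2 + 2)) ^ 2)) >
      (1 / 4) * (x ^ 2 + 2) ^ (-(5 : ℝ) / 2) := by
  set s := x ^ 2 + 2 with hs
  have hs0 : (0:ℝ) < s := by positivity
  have hs12 : (12:ℝ) < s := by
    have hexp : Real.exp (8/3) < s := (Real.lt_log_iff_exp_lt hs0).mp hlog
    have h1 : Real.exp (8/3) = Real.exp 1 * Real.exp 1 * Real.exp (2/3) := by
      rw [← Real.exp_add, ← Real.exp_add]; norm_num
    have h2 : (2.7:ℝ) < Real.exp 1 := by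
      have := Real.exp_one_gt_d9; linarith
    have h4 : (2:ℝ)/3 + 1 ≤ Real.exp (2/3) := Real.add_one_le_exp _
    nlinarith [Real.exp_pos (2/3), Real.exp_pos 1]
  have hx3 : (3:ℝ) < x := by nlinarith
  clear_value s
  set f : ℝ → ℝ := fun u => 1 / ((u ^ 2 + 2) * (Real.log (u ^ 2 + 2)) ^ 2) with hf
  have hfnn : ∀ u, 0 ≤ f u := fun u => by positivity
  have hfmeas : Measurable f := by
    apply Measurable.div measurable_const
    exact ((measurable_id.pow_const 2).add_const 2).mul
      ((Real.measurable_log.comp ((measurable_id.pow_const 2).add_const 2)).pow_const 2)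
  -- integrability
  have hint : IntegrableOn f (Set.Ioi x) := by
    apply Integrable.mono (integrable_inv_one_add_sq.integrableOn (s := Set.Ioi x))
      hfmeas.aestronglyMeasurable
    rw [ae_restrict_iff' measurableSet_Ioi]
    refine Filter.Eventually.of_forall fun u hu => ?_
    have hu' : x < u := hu
    have hlt : (1:ℝ) < Real.log (u ^ 2 + 2) := by
      have h1 : s ≤ u ^ 2 + 2 := by nlinarith
      have := Real.log_le_log hs0 h1
      linarith
    have ht0 : (0:ℝ) < u ^ 2 + 2 := by positivity
    rw [Real.norm_eq_abs, Real.norm_eq_abs, abs_of_nonneg (hfnn u),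
      abs_of_nonneg (by positivity : (0:ℝ) ≤ (1 + u^2)⁻¹)]
    show 1 / ((u ^ 2 + 2) * Real.log (u ^ 2 + 2) ^ 2) ≤ (1 + u ^ 2)⁻¹
    rw [one_div]
    apply inv_anti₀ (by positivity)
    have h2 : (1:ℝ) ≤ Real.log (u ^ 2 + 2) ^ 2 := by nlinarith
    nlinarith [mul_le_mul_of_nonneg_left h2 ht0.le]
  -- constant lower bound on (x, 2x]
  set c : ℝ := 1 / (128 * (s * Real.sqrt s)) with hc
  have hsqs : (0:ℝ) < Real.sqrt s := Real.sqrt_pos.mpr hs0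
  have hbound : ∀ u ∈ Set.Ioc x (2*x), c ≤ f u := by
    intro u hu
    obtain ⟨hu1, hu2⟩ := hu
    set t := u ^ 2 + 2 with htdef
    have ht0 : (0:ℝ) < t := by positivity
    have ht1 : (1:ℝ) < t := by nlinarith
    have hlog0 : 0 < Real.log t := Real.log_pos ht1
    have ht4s : t ≤ 4 * s := by nlinarith
    have hlog4 : Real.log t ≤ 4 * Real.sqrt (Real.sqrt t) := by
      have h1 : Real.log t = 4 * Real.log (Real.sqrt (Real.sqrt t)) := by
        rw [Real.log_sqrt (Real.sqrt_nonneg t), Real.log_sqrt ht0.le]; ring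
      have h2 : Real.log (Real.sqrt (Real.sqrt t)) ≤ Real.sqrt (Real.sqrt t) - 1 :=
        Real.log_le_sub_one_of_pos (by positivity)
      nlinarith
    have hsq : (Real.log t) ^ 2 ≤ 16 * Real.sqrt t := by
      have h3 : Real.sqrt (Real.sqrt t) ^ 2 = Real.sqrt t := Real.sq_sqrt (Real.sqrt_nonneg t)
      nlinarith [Real.sqrt_nonneg (Real.sqrt t)]
    have hst : Real.sqrt t ≤ 2 * Real.sqrt s := by
      have : Real.sqrt t ≤ Real.sqrt (4 * s) := Real.sqrt_le_sqrt ht4s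
      rwa [show (4:ℝ) * s = 2^2 * s by ring, Real.sqrt_mul (by positivity),
        Real.sqrt_sq (by norm_num : (0:ℝ) ≤ 2)] at this
    have hprod : t * (Real.log t) ^ 2 ≤ 128 * (s * Real.sqrt s) := by
      nlinarith [Real.sqrt_nonneg t, sq_nonneg (Real.log t)]
    exact one_div_le_one_div_of_le (by positivity) hprod
  -- integral over Ioc lower bound
  have hmono : (∫ u in Set.Ioc x (2*x), f u) ≤ ∫ u in Set.Ioi x, f u := by
    apply setIntegral_mono_set hint
    · exact Filter.Eventually.of_forall fun u => hfnn u
    · exact Filter.Eventually.of_forall Set.Ioc_subset_Ioi_self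
  have hconst : c * x ≤ ∫ u in Set.Ioc x (2*x), f u := by
    have hμ : (volume (Set.Ioc x (2*x))).toReal = x := by
      rw [Real.volume_Ioc, ENNReal.toReal_ofReal (by linarith)]; ring
    have := setIntegral_ge_of_const_le_real measurableSet_Ioc
      (by rw [Real.volume_Ioc]; exact ENNReal.ofReal_ne_top) hbound
      (hint.mono_set Set.Ioc_subset_Ioi_self)
    rwa [Measure.real, hμ] at this
  have hfinal : (1 / 4) * s ^ (-(5 : ℝ) / 2) < c * x := by
    have hrp : s ^ (-(5 : ℝ) / 2) = (s ^ 2 * Real.sqrt s)⁻¹ := by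
      rw [show (-(5:ℝ)/2) = -(5/2) by norm_num, Real.rpow_neg hs0.le]
      congr 1
      rw [show ((5:ℝ)/2) = 2 + 1/2 by norm_num, Real.rpow_add hs0,
        Real.rpow_two, Real.sqrt_eq_rpow]
    rw [hrp, hc]
    have h2 : Real.sqrt s ^ 2 = s := Real.sq_sqrt hs0.le
    rw [mul_comm (1 / (128 * (s * Real.sqrt s))) x, ← div_eq_mul_inv,
      mul_one_div, div_lt_div_iff₀ (by positivity) (by positivity)]
    have hxs : (36:ℝ) < x * s := by nlinarith
    have hkey : 36 * (s * Real.sqrt s) < (x * s) * (s * Real.sqrt s) :=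
      mul_lt_mul_of_pos_right hxs (mul_pos hs0 hsqs)
    nlinarith [hkey, mul_pos hs0 hsqs]
  calc (1 / 4) * s ^ (-(5 : ℝ) / 2) < c * x := hfinal
    _ ≤ ∫ u in Set.Ioc x (2*x), f u := hconst
    _ ≤ ∫ u in Set.Ioi x, f u := hmono
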